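/- Let T be a torus over an algebraically closed field k, and σ an algebraic automorphism of T of finite order n. Let N_σ : T → T be the map t ↦ t·σ(t)·σ²(t)···σ^{n-1}(t). Then the image of N_σ is equal to the identity component (T^σ)⁰ of the fixed point subgroup T^σ. -/

import Mathlib

/-! We model a torus `T` over an algebraically closed field `k` by its group of
points `Hom(X, kˣ)`, where `X` is the (finitely generated free) character lattice.
A finite-order algebraic automorphism of `T` corresponds to a finite-order
automorphism `σ` of `X`, acting on points by precomposition.  The identity component
of a diagonalizable group of points is its maximal divisible subgroup. -/

/-- Points of the torus with character lattice `X` over `k`. -/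
abbrev TorusPts (X : Type*) [AddCommGroup X] (k : Type*) [Field k] :=
  X →+ Additive kˣ

/-- Precomposition with an endomorphism of the character lattice, as a group
endomorphism of the points of the torus. -/
def precomp {X : Type*} [AddCommGroup X] (k : Type*) [Field k] (f : X →+ X) :
    TorusPts X k →+ TorusPts X k where
  toFun t := t.comp f
  map_zero' := by ext x; simp
  map_add' t s := by ext x; simp

/-- The subgroup of `σ`-fixed points of the torus. -/
def fixedSub {X : Type*} [AddCommGroup X] (k : Type*) [Field k] (σ : X →+ X) :
    AddSubgroup (TorusPts X k) :=
  AddMonoidHom.ker (precomp k σ - AddMonoidHom.id _)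

/-- The maximal divisible subgroup of an abelian group: the identity component of a
diagonalizable algebraic group over an algebraically closed field, seen on points. -/
def divPart (A : Type*) [AddCommGroup A] : AddSubgroup A :=
  ⨆ H ∈ {H : AddSubgroup A | ∀ m : ℕ, 0 < m → ∀ x ∈ H, ∃ y ∈ H, m • y = x}, H

-- aux lemmas
section Aux

lemma mem_fixedSub_iff {X : Type*} [AddCommGroup X] {k : Type*} [Field k]
    (σ : X →+ X) (t : TorusPts X k) :
    t ∈ fixedSub k σ ↔ ∀ x, t (σ x) = t x := by
  have hiff : t ∈ fixedSub k σ ↔ (precomp k σ - AddMonoidHom.id (TorusPts X k)) t = 0 :=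
    AddMonoidHom.mem_ker
  rw [hiff, AddMonoidHom.sub_apply, AddMonoidHom.id_apply, sub_eq_zero]
  constructor
  · intro h3 x
    exact DFunLike.congr_fun h3 x
  · intro h
    exact AddMonoidHom.ext fun x => h x

lemma divPart_le {A : Type*} [AddCommGroup A] (H : AddSubgroup A)
    (hH : ∀ m : ℕ, 0 < m → ∀ x ∈ H, ∃ y ∈ H, m • y = x) : H ≤ divPart A :=
  le_iSup₂ (f := fun (H : AddSubgroup A) (_ : H ∈ _) => H) H hH

lemma divPart_divisible {A : Type*} [AddCommGroup A] (m : ℕ) (hm : 0 < m) :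
    ∀ x ∈ divPart A, ∃ y ∈ divPart A, m • y = x := by
  intro x hx
  rw [divPart, iSup_subtype'] at hx
  refine AddSubgroup.iSup_induction (C := fun a => ∃ y ∈ divPart A, m • y = a) _ hx
    (fun H z hzH => ?_) ⟨0, zero_mem _, smul_zero m⟩
    (fun a b ⟨y, hy, hmy⟩ ⟨z, hz, hmz⟩ => ⟨y + z, add_mem hy hz, by rw [smul_add, hmy, hmz]⟩)
  obtain ⟨y, hy, hmy⟩ := H.2 m hm z hzH
  exact ⟨y, divPart_le H.1 H.2 hy, hmy⟩

end Aux

section Aux2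

/-- Units of an algebraically closed field are rootable. -/
noncomputable def unitsRootable (k : Type*) [Field k] [IsAlgClosed k] : RootableBy kˣ ℕ :=
  rootableByOfPowLeftSurj _ _ (fun {m} hm a => by
    obtain ⟨z, hz⟩ := IsAlgClosed.exists_pow_nat_eq (a : k) (Nat.pos_of_ne_zero hm)
    have hz0 : z ≠ 0 := by
      rintro rfl
      rw [zero_pow hm] at hz
      exact a.ne_zero hz.symm
    exact ⟨Units.mk0 z hz0, Units.ext (by simp [hz])⟩)

/-- `Additive kˣ` is divisible by `ℤ` when `k` is algebraically closed. -/
noncomputable def addUnitsDivisible (k : Type*) [Field k] [IsAlgClosed k] :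
    DivisibleBy (Additive kˣ) ℤ := by
  letI := unitsRootable k
  letI : RootableBy kˣ ℤ := Group.rootableByIntOfRootableByNat kˣ
  exact {
    div := fun a m => Additive.ofMul (RootableBy.root a.toMul m)
    div_zero := fun a => by
      show Additive.ofMul (RootableBy.root a.toMul (0 : ℤ)) = 0
      rw [RootableBy.root_zero]; rfl
    div_cancel := fun {m} a hm => by
      show m • Additive.ofMul (RootableBy.root a.toMul m) = a
      refine Additive.toMul.injective ?_
      rw [toMul_zsmul]
      exact RootableBy.root_cancel _ hm }

/-- A hom on a f.g. free `X` into a divisible group is divisible. -/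
lemma hom_divisible {X : Type*} [AddCommGroup X] [Module.Free ℤ X]
    {A : Type*} [AddCommGroup A] (hA : DivisibleBy A ℤ)
    (t : X →+ A) (m : ℕ) (hm : 0 < m) : ∃ t' : X →+ A, m • t' = t := by
  have hsurj : Function.Surjective ((m : ℤ) • (LinearMap.id : A →ₗ[ℤ] A)) := by
    intro a
    refine ⟨hA.div a m, ?_⟩
    have := hA.div_cancel a (n := (m : ℤ)) (by exact_mod_cast hm.ne')
    simpa using this
  obtain ⟨h, hh⟩ := Module.projective_lifting_property ((m : ℤ) • (LinearMap.id : A →ₗ[ℤ] A))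
    t.toIntLinearMap hsurj
  refine ⟨h.toAddMonoidHom, ?_⟩
  ext x
  have h2 := DFunLike.congr_fun hh x
  simp only [LinearMap.comp_apply, LinearMap.smul_apply, LinearMap.id_apply] at h2
  show m • h x = t x
  rw [← natCast_zsmul]
  exact h2

/-- Extension: a hom vanishing on the kernel of `s` lies in the range of `precomp s`. -/
lemma exists_comp_eq_of_ker {X : Type*} [AddCommGroup X]
    {A : Type*} [AddCommGroup A] (hA : DivisibleBy A ℤ)
    (s : X →+ X) (u : X →+ A) (h : ∀ x, s x = 0 → u x = 0) :
    ∃ t : X →+ A, t.comp s = u := by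
  classical
  -- key: u is constant on fibers of s
  have hfib : ∀ x y : X, s x = s y → u x = u y := by
    intro x y hxy
    have : u (x - y) = 0 := h _ (by rw [map_sub, hxy, sub_self])
    rw [map_sub, sub_eq_zero] at this
    exact this
  -- hom on the range of s
  let u0 : s.range →+ A :=
  { toFun := fun z => u z.2.choose
    map_zero' := h _ (((0 : s.range)).2.choose_spec)
    map_add' := fun a b => by
      rw [← map_add]
      refine hfib _ _ ?_
      rw [map_add, a.2.choose_spec, b.2.choose_spec, (a + b).2.choose_spec]
      rfl }
  letI : DivisibleBy A ℤ := hA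
  obtain ⟨t, ht⟩ := (Module.Baer.of_divisible A).extension_property_addMonoidHom
    s.range.subtype Subtype.val_injective u0
  refine ⟨t, ?_⟩
  ext x
  have h2 : t (s.range.subtype ⟨s x, ⟨x, rfl⟩⟩) = u0 ⟨s x, ⟨x, rfl⟩⟩ :=
    DFunLike.congr_fun ht (⟨s x, ⟨x, rfl⟩⟩ : s.range)
  show t (s x) = u x
  rw [show t (s x) = t (s.range.subtype ⟨s x, ⟨x, rfl⟩⟩) from rfl, h2]
  exact hfib _ _ ((⟨s x, ⟨x, rfl⟩⟩ : s.range)).2.choose_spec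

end Aux2

/-- Let `T` be a torus over an algebraically closed field `k` and `σ`
an algebraic automorphism of `T` of finite order `n`.  Then the image of the norm map
`N_σ : t ↦ t ⋅ σ(t) ⋯ σ^{n-1}(t)` equals the identity component `(T^σ)⁰` of the fixed
point subgroup `T^σ`. -/
theorem range_norm_eq_identityComponent_fixed
    {k : Type*} [Field k] [IsAlgClosed k]
    {X : Type*} [AddCommGroup X] [Module.Free ℤ X] [Module.Finite ℤ X]
    (σ : AddAut X) (n : ℕ) (hn : 0 < n) (hord : addOrderOf σ = n) :
    AddMonoidHom.range
        (∑ i ∈ Finset.range n, precomp k ((i • σ : AddAut X) : X →+ X))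
      = AddSubgroup.map (fixedSub k ((σ : AddAut X) : X →+ X)).subtype
          (divPart (fixedSub k ((σ : AddAut X) : X →+ X))) := by
  classical
  set σ₀ : X →+ X := ((σ : AddAut X) : X →+ X) with hσ₀def
  set s : X →+ X := ∑ i ∈ Finset.range n, ((i • σ : AddAut X) : X →+ X) with hsdef
  set F := fixedSub k σ₀ with hFdef
  have hσn : ∀ x : X, (n • σ : AddAut X) x = x := by
    intro x
    rw [← hord, addOrderOf_nsmul_eq_zero]
    rfl
  have hsx : ∀ x : X, s x = ∑ i ∈ Finset.range n, (i • σ : AddAut X) x := by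
    intro x
    rw [hsdef, AddMonoidHom.finset_sum_apply]
    rfl
  have hcomp : ∀ x : X, s (σ x) = s x := by
    intro x
    rw [hsx, hsx]
    have h1 : ∀ i, (i • σ : AddAut X) (σ x) = ((i + 1) • σ : AddAut X) x := by
      intro i
      rw [succ_nsmul]
      rfl
    rw [Finset.sum_congr rfl fun i _ => h1 i]
    have h2 := Finset.sum_range_succ (fun i => (i • σ : AddAut X) x) n
    have h3 := Finset.sum_range_succ' (fun i => (i • σ : AddAut X) x) n
    rw [h2] at h3
    have h4 : (n • σ : AddAut X) x = (0 • σ : AddAut X) x := by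
      rw [hσn x, zero_nsmul]
      rfl
    rw [h4] at h3
    exact (add_right_cancel h3).symm
  have hNs : (∑ i ∈ Finset.range n, precomp k ((i • σ : AddAut X) : X →+ X)) = precomp k s := by
    refine AddMonoidHom.ext fun t => AddMonoidHom.ext fun x => ?_
    rw [AddMonoidHom.finset_sum_apply, AddMonoidHom.finset_sum_apply]
    show ∑ i ∈ Finset.range n, t (((i • σ : AddAut X) : X →+ X) x) = t (s x)
    rw [hsx, map_sum]
    exact Finset.sum_congr rfl fun i _ => rfl
  have hfix : ∀ t : TorusPts X k, precomp k s t ∈ F := by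
    intro t
    rw [hFdef, mem_fixedSub_iff]
    intro x
    show t (s (σ₀ x)) = t (s x)
    show t (s (σ x)) = t (s x)
    rw [hcomp]
  refine le_antisymm ?_ ?_
  · rw [hNs]
    rintro u ⟨t, rfl⟩
    refine ⟨⟨precomp k s t, hfix t⟩, ?_, rfl⟩
    have hR : ∀ m : ℕ, 0 < m → ∀ v ∈ AddSubgroup.comap F.subtype (precomp k s).range,
        ∃ y ∈ AddSubgroup.comap F.subtype (precomp k s).range, m • y = v := by
      intro m hm v hv
      obtain ⟨t1, ht1⟩ := hv
      obtain ⟨t2, ht2⟩ := hom_divisible (addUnitsDivisible k) t1 m hm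
      refine ⟨⟨precomp k s t2, hfix t2⟩, ⟨t2, rfl⟩, ?_⟩
      apply Subtype.ext
      show m • precomp k s t2 = (v : TorusPts X k)
      rw [← map_nsmul (precomp k s) m t2, ht2]
      exact ht1
    exact divPart_le _ hR ⟨t, rfl⟩
  · rintro u ⟨⟨v, hvF⟩, hvD, rfl⟩
    rw [hNs]
    have hv0 : ∀ x : X, s x = 0 → v x = 0 := by
      intro x hx
      set y : X := ∑ i ∈ Finset.range n, ∑ j ∈ Finset.range i, (j • σ : AddAut X) x with hydef
      have hterm : ∀ i, σ (∑ j ∈ Finset.range i, (j • σ : AddAut X) x)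
          - ∑ j ∈ Finset.range i, (j • σ : AddAut X) x = (i • σ : AddAut X) x - x := by
        intro i
        rw [map_sum, ← Finset.sum_sub_distrib]
        have h5 : ∀ j, σ ((j • σ : AddAut X) x) - (j • σ : AddAut X) x
            = ((j + 1) • σ : AddAut X) x - (j • σ : AddAut X) x := by
          intro j
          rw [succ_nsmul']
          rfl
        rw [Finset.sum_congr rfl fun j _ => h5 j, Finset.sum_range_sub
          (fun j => (j • σ : AddAut X) x) i, zero_nsmul]
        rfl
      have hkey : σ y - y = s x - n • x := by
        rw [hydef, map_sum, ← Finset.sum_sub_distrib,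
          Finset.sum_congr rfl fun i _ => hterm i, Finset.sum_sub_distrib,
          Finset.sum_const, Finset.card_range, ← hsx]
      rw [hx, zero_sub] at hkey
      have hnx : n • x = y - σ y := by
        rw [← neg_neg (n • x), ← hkey, neg_sub]
      obtain ⟨w, hwD, hwv⟩ := divPart_divisible n hn (⟨v, hvF⟩ : F) hvD
      have hwFix : ∀ z, (w : TorusPts X k) (σ z) = (w : TorusPts X k) z :=
        (mem_fixedSub_iff σ₀ _).1 w.2
      have hvw : v = n • (w : TorusPts X k) := by
        have h6 := congrArg (Subtype.val) hwv
        exact h6.symm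
      calc v x = (n • (w : TorusPts X k)) x := by rw [← hvw]
        _ = (w : TorusPts X k) (n • x) := by
              rw [AddMonoidHom.nsmul_apply, ← map_nsmul]
        _ = (w : TorusPts X k) y - (w : TorusPts X k) (σ y) := by rw [hnx, map_sub]
        _ = 0 := by rw [hwFix y, sub_self]
    obtain ⟨t, ht⟩ := exists_comp_eq_of_ker (addUnitsDivisible k) s v hv0
    exact ⟨t, ht⟩
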